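/- Let α > 0, δ > 0 and set t̄ = δ/α. Define for t ≥ 0 and x ∈ ℝ: f₁(t,x) = −(x − t/2 − t²)²/(1 + 4t), f₂(t,x) = −(x − α − t/2 − t²)²/(1 + 4t) − δ + αt, g₁(t,x) = f₁(t,x) + δ − αt, and g₂(t,x) = −(x − α − t/2 − t²)²/(1 + 4t). Then: (i) for every t with 0 ≤ t < t̄, the function x ↦ max(f₁(t,x), f₂(t,x)) has maximum value 0 over ℝ, attained exactly at the single point x = t/2 + t²; (ii) for every t > t̄, the function x ↦ max(g₁(t,x), g₂(t,x)) has maximum value 0 over ℝ, attained exactly at the single point x = α + t/2 + t². Consequently, the concentration point x̄(t) (the unique maximizer) jumps by α at time t̄, and the associated multiplier ϱ(t), equal to t/2 + t² for t < t̄ and to α + t/2 + t² for t > t̄, is discontinuous at t̄. -/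

import Mathlib

open Set

/-- conclusion of the analytical counterexample of Section 6.1 of the
paper: with `f₁, f₂, g₁, g₂` the explicit quadratic profiles and `t̄ = δ/α`, for
`0 ≤ t < t̄` the function `max(f₁(t,·), f₂(t,·))` has maximum `0` attained exactly at
`t/2 + t²`, while for `t > t̄` the function `max(g₁(t,·), g₂(t,·))` has maximum `0`
attained exactly at `α + t/2 + t²`; consequently the concentration point jumps by `α`
at `t̄` and the multiplier `ϱ` is discontinuous at `t̄`. -/
theorem jump_of_concentration_point
    (α δ : ℝ) (hα : 0 < α) (hδ : 0 < δ) :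
    letI tbar : ℝ := δ / α
    letI f₁ : ℝ → ℝ → ℝ := fun t x => -(x - t / 2 - t ^ 2) ^ 2 / (1 + 4 * t)
    letI f₂ : ℝ → ℝ → ℝ := fun t x =>
      -(x - α - t / 2 - t ^ 2) ^ 2 / (1 + 4 * t) - δ + α * t
    letI g₁ : ℝ → ℝ → ℝ := fun t x => f₁ t x + δ - α * t
    letI g₂ : ℝ → ℝ → ℝ := fun t x => -(x - α - t / 2 - t ^ 2) ^ 2 / (1 + 4 * t)
    -- (i) before the critical time t̄ the unique maximizer is t/2 + t²
    ((∀ t, 0 ≤ t → t < tbar →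
        (∀ x, max (f₁ t x) (f₂ t x) ≤ 0) ∧
        max (f₁ t (t / 2 + t ^ 2)) (f₂ t (t / 2 + t ^ 2)) = 0 ∧
        (∀ x, max (f₁ t x) (f₂ t x) = 0 → x = t / 2 + t ^ 2)) ∧
    -- (ii) after the critical time t̄ the unique maximizer is α + t/2 + t²
    (∀ t, tbar < t →
        (∀ x, max (g₁ t x) (g₂ t x) ≤ 0) ∧
        max (g₁ t (α + t / 2 + t ^ 2)) (g₂ t (α + t / 2 + t ^ 2)) = 0 ∧
        (∀ x, max (g₁ t x) (g₂ t x) = 0 → x = α + t / 2 + t ^ 2)) ∧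
    -- consequently the multiplier ϱ, equal to t/2 + t² for t < t̄ and to
    -- α + t/2 + t² for t > t̄, is discontinuous at t̄
    (∀ ϱ : ℝ → ℝ,
        (∀ t ∈ Ico (0 : ℝ) tbar, ϱ t = t / 2 + t ^ 2) →
        (∀ t, tbar < t → ϱ t = α + t / 2 + t ^ 2) →
        ¬ ContinuousAt ϱ tbar)) := by
  have htbar : 0 < δ / α := div_pos hδ hα
  refine ⟨?_, ?_, ?_⟩
  · intro t ht0 htb
    have h4 : (0:ℝ) < 1 + 4 * t := by linarith
    have hαt : α * t < δ := by
      rw [lt_div_iff₀ hα] at htb; linarith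
    have hf1 : ∀ x : ℝ, -(x - t / 2 - t ^ 2) ^ 2 / (1 + 4 * t) ≤ 0 := by
      intro x
      apply div_nonpos_of_nonpos_of_nonneg (neg_nonpos.2 (sq_nonneg _)) h4.le
    have hf2 : ∀ x : ℝ, -(x - α - t / 2 - t ^ 2) ^ 2 / (1 + 4 * t) - δ + α * t < 0 := by
      intro x
      have : -(x - α - t / 2 - t ^ 2) ^ 2 / (1 + 4 * t) ≤ 0 :=
        div_nonpos_of_nonpos_of_nonneg (neg_nonpos.2 (sq_nonneg _)) h4.le
      linarith
    refine ⟨fun x => max_le (hf1 x) (hf2 x).le, ?_, ?_⟩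
    · show max (-(t / 2 + t ^ 2 - t / 2 - t ^ 2) ^ 2 / (1 + 4 * t))
          (-(t / 2 + t ^ 2 - α - t / 2 - t ^ 2) ^ 2 / (1 + 4 * t) - δ + α * t) = 0
      have h1 : -(t / 2 + t ^ 2 - t / 2 - t ^ 2) ^ 2 / (1 + 4 * t) = 0 := by ring_nf
      rw [h1]
      exact max_eq_left (hf2 _).le
    · intro x hx
      rcases max_cases (-(x - t / 2 - t ^ 2) ^ 2 / (1 + 4 * t))
          (-(x - α - t / 2 - t ^ 2) ^ 2 / (1 + 4 * t) - δ + α * t) with ⟨h, _⟩ | ⟨h, _⟩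
      · rw [h] at hx
        field_simp at hx
        have h0 := (pow_eq_zero_iff two_ne_zero).mp (by linarith : (x * 2 - t - t ^ 2 * 2) ^ 2 = 0)
        linarith
      · rw [h] at hx
        exact absurd hx (ne_of_lt (hf2 x))
  · intro t htb
    have ht0 : 0 < t := htbar.trans htb
    have h4 : (0:ℝ) < 1 + 4 * t := by linarith
    have hαt : δ < α * t := (div_lt_iff₀ hα).mp htb |>.trans_eq (mul_comm t α)
    have hg2 : ∀ x : ℝ, -(x - α - t / 2 - t ^ 2) ^ 2 / (1 + 4 * t) ≤ 0 := by
      intro x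
      exact div_nonpos_of_nonpos_of_nonneg (neg_nonpos.2 (sq_nonneg _)) h4.le
    have hg1 : ∀ x : ℝ, -(x - t / 2 - t ^ 2) ^ 2 / (1 + 4 * t) + δ - α * t < 0 := by
      intro x
      have : -(x - t / 2 - t ^ 2) ^ 2 / (1 + 4 * t) ≤ 0 :=
        div_nonpos_of_nonpos_of_nonneg (neg_nonpos.2 (sq_nonneg _)) h4.le
      linarith
    refine ⟨fun x => max_le (hg1 x).le (hg2 x), ?_, ?_⟩
    · show max (-(α + t / 2 + t ^ 2 - t / 2 - t ^ 2) ^ 2 / (1 + 4 * t) + δ - α * t)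
          (-(α + t / 2 + t ^ 2 - α - t / 2 - t ^ 2) ^ 2 / (1 + 4 * t)) = 0
      have h2 : -(α + t / 2 + t ^ 2 - α - t / 2 - t ^ 2) ^ 2 / (1 + 4 * t) = 0 := by ring_nf
      rw [h2]
      exact max_eq_right (hg1 _).le
    · intro x hx
      rcases max_cases (-(x - t / 2 - t ^ 2) ^ 2 / (1 + 4 * t) + δ - α * t)
          (-(x - α - t / 2 - t ^ 2) ^ 2 / (1 + 4 * t)) with ⟨h, _⟩ | ⟨h, _⟩
      · rw [h] at hx
        exact absurd hx (ne_of_lt (hg1 x))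
      · rw [h] at hx
        field_simp at hx
        have h0 := (pow_eq_zero_iff two_ne_zero).mp (by linarith : ((x - α) * 2 - t - t ^ 2 * 2) ^ 2 = 0)
        linarith
  · intro ϱ hL hR hc
    set tb : ℝ := δ / α with htb
    have hmemL : Ioo (0 : ℝ) tb ∈ nhdsWithin tb (Iio tb) :=
      Ioo_mem_nhdsLT_of_mem ⟨htbar, le_refl _⟩
    have heqL : ϱ =ᶠ[nhdsWithin tb (Iio tb)] fun t => t / 2 + t ^ 2 := by
      filter_upwards [hmemL] with t ht
      exact hL t ⟨ht.1.le, ht.2⟩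
    have hpolyL : Filter.Tendsto (fun t : ℝ => t / 2 + t ^ 2) (nhdsWithin tb (Iio tb))
        (nhds (tb / 2 + tb ^ 2)) :=
      ((continuous_id.div_const 2).add (continuous_pow 2)).tendsto tb |>.mono_left
        nhdsWithin_le_nhds
    have hLlim : Filter.Tendsto ϱ (nhdsWithin tb (Iio tb)) (nhds (tb / 2 + tb ^ 2)) :=
      hpolyL.congr' heqL.symm
    have hLlim' : Filter.Tendsto ϱ (nhdsWithin tb (Iio tb)) (nhds (ϱ tb)) :=
      (hc.continuousWithinAt).tendsto
    have h1 : ϱ tb = tb / 2 + tb ^ 2 := tendsto_nhds_unique hLlim' hLlim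
    have heqR : ϱ =ᶠ[nhdsWithin tb (Ioi tb)] fun t => α + t / 2 + t ^ 2 := by
      filter_upwards [self_mem_nhdsWithin] with t ht
      exact hR t ht
    have hpolyR : Filter.Tendsto (fun t : ℝ => α + t / 2 + t ^ 2) (nhdsWithin tb (Ioi tb))
        (nhds (α + tb / 2 + tb ^ 2)) :=
      ((continuous_const.add (continuous_id.div_const 2)).add (continuous_pow 2)).tendsto tb
        |>.mono_left nhdsWithin_le_nhds
    have hRlim : Filter.Tendsto ϱ (nhdsWithin tb (Ioi tb)) (nhds (α + tb / 2 + tb ^ 2)) :=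
      hpolyR.congr' heqR.symm
    have hRlim' : Filter.Tendsto ϱ (nhdsWithin tb (Ioi tb)) (nhds (ϱ tb)) :=
      (hc.continuousWithinAt).tendsto
    have h2 : ϱ tb = α + tb / 2 + tb ^ 2 := tendsto_nhds_unique hRlim' hRlim
    rw [h1] at h2
    linarith
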